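/- Let a be a complex number such that neither 3a nor 3a + 1/2 is a nonpositive integer. Then ₃F₂(2a, 2a − 1/3, 2a + 1/3; 3a, 3a + 1/2; 1) = (3/2)^{6a−1}, where (3/2)^{6a−1} denotes the principal complex power. (The parametric excess equals 1/2, so the series converges.) -/

import Mathlib

open Complex Finset Filter Topology Polynomial

noncomputable section
set_option linter.unusedSectionVars false
set_option linter.unusedTactic false
set_option linter.unnecessarySeqFocus false
set_option linter.unnecessarySimpa false
set_option maxHeartbeats 1000000

noncomputable section

variable {K : Type*} [Field K] [CharZero K]
set_option linter.unusedSectionVars false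
set_option linter.unusedTactic false

/-- `FF k x = x * (x+2k+1)(x+2k+2)⋯(x+3k-1) / k!` for `k ≥ 1`; `FF 0 x = 1`. -/
def FF : ℕ → K → K
  | 0, _ => 1
  | (j+1), x => x * (∏ i ∈ Finset.range j, (x + 2*(j:K)+3+(i:K))) / ((Nat.factorial (j+1) : K))

/-- `GG k t = (t+2k+1)(t+2k+2)⋯(t+3k) / k!`. -/
def GG (k : ℕ) (t : K) : K := (∏ i ∈ Finset.range k, (t + 2*(k:K)+1+(i:K))) / (Nat.factorial k : K)

lemma FF_zero (x : K) : FF 0 x = 1 := rfl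

lemma FF_succ (j : ℕ) (x : K) :
    FF (j+1) x = x * (∏ i ∈ Finset.range j, (x + 2*(j:K)+3+(i:K))) / ((Nat.factorial (j+1) : K)) := rfl

lemma GG_zero (t : K) : GG 0 t = 1 := by simp [GG]

lemma FF_succ_zero (j : ℕ) : FF (j+1) (0:K) = 0 := by simp [FF_succ]

lemma fact_ne (k : ℕ) : ((Nat.factorial k : K)) ≠ 0 := by
  exact_mod_cast Nat.cast_ne_zero.mpr (Nat.factorial_ne_zero k)

/-- Pascal-type recurrence for `GG`. -/
lemma GG_pascal (k : ℕ) (t : K) : GG (k+1) t = GG (k+1) (t-1) + GG k (t+2) := by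
  have h1 : ∏ i ∈ Finset.range (k+1), (t + 2*((k:K)+1)+1+(i:K)) =
      (∏ i ∈ Finset.range k, (t + 2*(k:K)+3+(i:K))) * (t + 3*(k:K)+3) := by
    rw [Finset.prod_range_succ]
    congr 1
    · apply Finset.prod_congr rfl; intro i _; ring
    · push_cast; ring
  have h2 : ∏ i ∈ Finset.range (k+1), ((t-1) + 2*((k:K)+1)+1+(i:K)) =
      (∏ i ∈ Finset.range k, (t + 2*(k:K)+3+(i:K))) * (t + 2*(k:K)+2) := by
    rw [Finset.prod_range_succ']
    congr 1
    · apply Finset.prod_congr rfl; intro i _; push_cast; ring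
    · push_cast; ring
  have h3 : ∏ i ∈ Finset.range k, ((t+2) + 2*(k:K)+1+(i:K)) =
      ∏ i ∈ Finset.range k, (t + 2*(k:K)+3+(i:K)) := by
    apply Finset.prod_congr rfl; intro i _; ring
  unfold GG
  rw [h3]
  push_cast at h1 h2 ⊢
  rw [h1, h2]
  have hf1 : ((Nat.factorial (k+1) : K)) ≠ 0 := fact_ne _
  have hf2 : ((Nat.factorial k : K)) ≠ 0 := fact_ne _
  rw [Nat.factorial_succ] at hf1 ⊢
  push_cast at hf1 ⊢
  field_simp
  ring

/-- Pascal-type recurrence for `FF`. -/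
lemma FF_pascal (j : ℕ) (x : K) : FF (j+1) x = FF (j+1) (x-1) + FF j (x+2) := by
  cases j with
  | zero => simp [FF_succ, FF_zero, Nat.factorial]
  | succ m =>
    have h1 : ∏ i ∈ Finset.range (m+1), (x + 2*((m:K)+1)+3+(i:K)) =
        (∏ i ∈ Finset.range m, (x + 2*(m:K)+5+(i:K))) * (x + 3*(m:K)+5) := by
      rw [Finset.prod_range_succ]
      congr 1
      · apply Finset.prod_congr rfl; intro i _; ring
      · push_cast; ring
    have h2 : ∏ i ∈ Finset.range (m+1), ((x-1) + 2*((m:K)+1)+3+(i:K)) =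
        (∏ i ∈ Finset.range m, (x + 2*(m:K)+5+(i:K))) * (x + 2*(m:K)+4) := by
      rw [Finset.prod_range_succ']
      congr 1
      · apply Finset.prod_congr rfl; intro i _; push_cast; ring
      · push_cast; ring
    have h3 : ∏ i ∈ Finset.range m, ((x+2) + 2*(m:K)+3+(i:K)) =
        ∏ i ∈ Finset.range m, (x + 2*(m:K)+5+(i:K)) := by
      apply Finset.prod_congr rfl; intro i _; ring
    rw [FF_succ, FF_succ, FF_succ]
    rw [h3]
    push_cast at h1 h2 ⊢
    rw [h1, h2]
    have hf1 : ((Nat.factorial (m+2) : K)) ≠ 0 := fact_ne _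
    have hf2 : ((Nat.factorial (m+1) : K)) ≠ 0 := fact_ne _
    have hfs : (Nat.factorial (m+2) : K) = ((m:K)+2) * (Nat.factorial (m+1) : K) := by
      rw [show m+2 = (m+1)+1 from rfl, Nat.factorial_succ]; push_cast; ring
    rw [hfs] at hf1 ⊢
    have hm2 : ((m:K)+2) ≠ 0 := by
      have : m + 2 ≠ 0 := by omega
      exact_mod_cast this
    field_simp
    ring

/-- `FF` in terms of `GG`. -/
lemma FF_eq_GG (k : ℕ) (t : K) : FF (k+1) t = GG (k+1) t - 3 * GG k (t+2) := by
  have h1 : ∏ i ∈ Finset.range (k+1), (t + 2*((k:K)+1)+1+(i:K)) =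
      (∏ i ∈ Finset.range k, (t + 2*(k:K)+3+(i:K))) * (t + 3*(k:K)+3) := by
    rw [Finset.prod_range_succ]
    congr 1
    · apply Finset.prod_congr rfl; intro i _; ring
    · push_cast; ring
  have h3 : ∏ i ∈ Finset.range k, ((t+2) + 2*(k:K)+1+(i:K)) =
      ∏ i ∈ Finset.range k, (t + 2*(k:K)+3+(i:K)) := by
    apply Finset.prod_congr rfl; intro i _; ring
  rw [FF_succ]
  unfold GG
  rw [h3]
  push_cast at h1 ⊢
  rw [h1]
  have hf1 : ((Nat.factorial (k+1) : K)) ≠ 0 := fact_ne _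
  have hf2 : ((Nat.factorial k : K)) ≠ 0 := fact_ne _
  rw [Nat.factorial_succ] at hf1 ⊢
  push_cast at hf1 ⊢
  field_simp
  ring

/-- coefficient shift used for the cubic equation: `FF (k+1) 1 = FF k 3`. -/
lemma FF_succ_one (k : ℕ) : FF (k+1) (1:K) = FF k 3 := by
  cases k with
  | zero => simp [FF_succ, FF_zero, Nat.factorial]
  | succ m =>
    rw [FF_succ, FF_succ]
    have h1 : ∏ i ∈ Finset.range (m+1), ((1:K) + 2*((m:K)+1)+3+(i:K)) =
        (∏ i ∈ Finset.range m, ((3:K) + 2*(m:K)+3+(i:K))) * (3*(m:K)+6) := by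
      rw [Finset.prod_range_succ]
      congr 1
      · apply Finset.prod_congr rfl; intro i _; ring
      · push_cast; ring
    push_cast at h1 ⊢
    rw [h1]
    have hf2 : ((Nat.factorial (m+1) : K)) ≠ 0 := fact_ne _
    have hfs : (Nat.factorial (m+2) : K) = ((m:K)+2) * (Nat.factorial (m+1) : K) := by
      rw [show m+2 = (m+1)+1 from rfl, Nat.factorial_succ]; push_cast; ring
    rw [hfs]
    have h2 : ((m:K)+2) ≠ 0 := by
      intro h; have := eq_neg_of_add_eq_zero_left h
      norm_cast at h
    field_simp
    ring


/-- polynomial representing `FF j`. -/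
def Fpoly : ℕ → Polynomial ℂ
  | 0 => 1
  | (j+1) => Polynomial.C (((Nat.factorial (j+1) : ℂ))⁻¹) *
      (Polynomial.X * ∏ i ∈ Finset.range j, (Polynomial.X + Polynomial.C (2*(j:ℂ)+3+(i:ℂ))))

lemma Fpoly_eval (j : ℕ) (x : ℂ) : (Fpoly j).eval x = FF j x := by
  cases j with
  | zero => simp [Fpoly, FF_zero]
  | succ m =>
    simp [Fpoly, FF_succ, eval_prod]
    rw [div_eq_inv_mul]
    congr 2
    apply Finset.prod_congr rfl; intro i _; ring

/-- polynomial representing `x ↦ GG k (x+y)`. -/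
def Gpoly (k : ℕ) (y : ℂ) : Polynomial ℂ :=
  Polynomial.C ((Nat.factorial k : ℂ))⁻¹ *
    ∏ i ∈ Finset.range k, (Polynomial.X + Polynomial.C (y + 2*(k:ℂ)+1+(i:ℂ)))

lemma Gpoly_eval (k : ℕ) (y x : ℂ) : (Gpoly k y).eval x = GG k (x+y) := by
  simp [Gpoly, GG, eval_prod]
  rw [div_eq_inv_mul]
  congr 1
  apply Finset.prod_congr rfl; intro i _; ring

lemma hagen : ∀ (k : ℕ) (y x : ℂ),
    ∑ j ∈ Finset.range (k+1), FF j x * GG (k-j) y = GG k (x+y) := by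
  intro k
  induction k with
  | zero => intro y x; simp [FF_zero, GG_zero]
  | succ k IH =>
    intro y
    -- first: natural x
    have hnat : ∀ m : ℕ,
        ∑ j ∈ Finset.range (k+2), FF j ((m:ℂ)) * GG (k+1-j) y = GG (k+1) ((m:ℂ)+y) := by
      intro m
      induction m with
      | zero =>
        rw [Finset.sum_range_succ']
        simp [FF_succ_zero, FF_zero]
      | succ m IHm =>
        have key : ∀ (j : ℕ) (x : ℂ), FF (j+1) (x+1) = FF (j+1) x + FF j (x+3) := by
          intro j x
          have := FF_pascal j (x+1)
          simpa [show x+1-1 = x by ring, show x+1+2 = x+3 by ring] using this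
        have hsplit : ∀ x : ℂ, ∑ j ∈ Finset.range (k+2), FF j x * GG (k+1-j) y =
            GG (k+1) y + ∑ i ∈ Finset.range (k+1), FF (i+1) x * GG (k-i) y := by
          intro x
          rw [Finset.sum_range_succ']
          simp only [Nat.succ_sub_succ, FF_zero, one_mul, Nat.sub_zero]
          ring
        have hstep : ((m+1 : ℕ) : ℂ) = (m:ℂ) + 1 := by push_cast; ring
        rw [hstep, hsplit]
        have : ∑ i ∈ Finset.range (k+1), FF (i+1) ((m:ℂ)+1) * GG (k-i) y =
            ∑ i ∈ Finset.range (k+1), FF (i+1) ((m:ℂ)) * GG (k-i) y +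
            ∑ i ∈ Finset.range (k+1), FF i ((m:ℂ)+3) * GG (k-i) y := by
          rw [← Finset.sum_add_distrib]
          apply Finset.sum_congr rfl; intro i _
          rw [key i ((m:ℂ))]; ring
        rw [this, IH y ((m:ℂ)+3)]
        have hGp := GG_pascal k ((m:ℂ)+1+y)
        have h1 : (m:ℂ)+1+y-1 = (m:ℂ)+y := by ring
        have h2 : (m:ℂ)+1+y+2 = (m:ℂ)+3+y := by ring
        rw [h1, h2] at hGp
        rw [hGp, ← IHm, hsplit ((m:ℂ))]
        ring
    -- extend to all complex x by polynomial rigidity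
    intro x
    have hpoly : (∑ j ∈ Finset.range (k+2), Fpoly j * Polynomial.C (GG (k+1-j) y)) =
        Gpoly (k+1) y := by
      apply Polynomial.eq_of_infinite_eval_eq
      apply Set.infinite_of_injective_forall_mem (f := fun m : ℕ => (m:ℂ))
      · exact Nat.cast_injective
      · intro m
        simp only [Set.mem_setOf_eq, Polynomial.eval_finset_sum, Polynomial.eval_mul,
          Polynomial.eval_C, Fpoly_eval, Gpoly_eval]
        exact hnat m
    have := congrArg (Polynomial.eval x) hpoly
    simpa only [Polynomial.eval_finset_sum, Polynomial.eval_mul, Polynomial.eval_C,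
      Fpoly_eval, Gpoly_eval] using this

lemma rothe (k : ℕ) (x y : ℂ) :
    ∑ j ∈ Finset.range (k+1), FF j x * FF (k-j) y = FF k (x+y) := by
  cases k with
  | zero => simp [FF_zero]
  | succ m =>
    rw [Finset.sum_range_succ]
    have hsub : ∀ j ∈ Finset.range (m+1), FF j x * FF (m+1-j) y =
        FF j x * GG (m+1-j) y - 3 * (FF j x * GG (m-j) (y+2)) := by
      intro j hj
      have hj' : j ≤ m := by simpa using Finset.mem_range_succ_iff.mp hj
      have e1 : m+1-j = (m-j)+1 := by omega
      rw [e1, FF_eq_GG (m-j) y]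
      ring
    rw [Finset.sum_congr rfl hsub, Finset.sum_sub_distrib]
    have hH1 := hagen (m+1) y x
    rw [Finset.sum_range_succ] at hH1
    have e2 : ∑ j ∈ Finset.range (m+1), FF j x * GG (m+1-j) y =
        GG (m+1) (x+y) - FF (m+1) x * GG (m+1-(m+1)) y := by
      rw [← hH1]; ring
    have hH2 := hagen m (y+2) x
    rw [e2]
    simp only [Nat.sub_self, GG_zero, mul_one] at *
    rw [← Finset.mul_sum, hH2, FF_eq_GG m (x+y)]
    have : x + y + 2 = x + (y+2) := by ring
    rw [this, FF_zero]
    ring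

/-- real nonnegativity -/
lemma FF_nonneg {R : ℝ} (hR : 0 ≤ R) (k : ℕ) : 0 ≤ FF k R := by
  cases k with
  | zero => norm_num [FF_zero]
  | succ j =>
    rw [FF_succ]
    apply div_nonneg _ (by positivity)
    apply mul_nonneg hR
    apply Finset.prod_nonneg
    intro i _; positivity

lemma FF_pos {R : ℝ} (hR : 0 < R) (k : ℕ) : 0 < FF k R := by
  cases k with
  | zero => norm_num [FF_zero]
  | succ j =>
    rw [FF_succ]
    apply div_pos _ (by positivity)
    apply mul_pos hR
    apply Finset.prod_pos
    intro i _; positivity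

/-- monotonicity in the argument -/
lemma FF_mono {r R : ℝ} (hr : 0 ≤ r) (hrR : r ≤ R) (k : ℕ) : FF k r ≤ FF k R := by
  cases k with
  | zero => simp [FF_zero]
  | succ j =>
    rw [FF_succ, FF_succ]
    have h1 : r * (∏ i ∈ Finset.range j, (r + 2*(j:ℝ)+3+(i:ℝ))) ≤
        R * (∏ i ∈ Finset.range j, (R + 2*(j:ℝ)+3+(i:ℝ))) := by
      apply mul_le_mul hrR ?_ ?_ (le_trans hr hrR)
      · apply Finset.prod_le_prod
        · intro i _; positivity
        · intro i _; linarith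
      · apply Finset.prod_nonneg; intro i _; positivity
    apply div_le_div_of_nonneg_right h1 ?_ |>.trans_eq rfl
    positivity

/-- norm bound -/
lemma FF_norm_le (k : ℕ) (x : ℂ) : ‖FF k x‖ ≤ FF k ‖x‖ := by
  cases k with
  | zero => simp [FF_zero]
  | succ j =>
    rw [FF_succ, FF_succ]
    rw [norm_div, norm_mul, Complex.norm_natCast]
    have h1 : ‖x‖ * ‖∏ i ∈ Finset.range j, (x + 2*(j:ℂ)+3+(i:ℂ))‖ ≤
        ‖x‖ * (∏ i ∈ Finset.range j, (‖x‖ + 2*(j:ℝ)+3+(i:ℝ))) := by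
      apply mul_le_mul le_rfl ?_ (norm_nonneg _) (norm_nonneg _)
      rw [norm_prod]
      apply Finset.prod_le_prod (fun i _ => norm_nonneg _)
      intro i _
      calc ‖x + 2*(j:ℂ)+3+(i:ℂ)‖ = ‖x + (2*(j:ℂ)+3+(i:ℂ))‖ := by ring_nf
      _ ≤ ‖x‖ + ‖(2*(j:ℂ)+3+(i:ℂ))‖ := norm_add_le _ _
      _ = ‖x‖ + (2*(j:ℝ)+3+(i:ℝ)) := by
          congr 1
          have : (2*(j:ℂ)+3+(i:ℂ)) = (((2*(j:ℝ)+3+(i:ℝ)) : ℝ) : ℂ) := by push_cast; ring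
          rw [this, Complex.norm_real, Real.norm_of_nonneg (by positivity)]
      _ = ‖x‖ + 2*(j:ℝ)+3+(i:ℝ) := by ring
    apply div_le_div_of_nonneg_right h1 ?_ |>.trans_eq rfl
    positivity

/-- the key cubic inequality -/
lemma raabe_cubic {R : ℝ} (hR : 0 ≤ R) (k : ℕ) (hk : (R+3)^2 ≤ (k:ℝ)) :
    4*(R+3*(k:ℝ)+3)*(R+3*k+4)*(R+3*k+5) ≤ 27*((k:ℝ)+3/4)*(R+2*k+3)*(R+2*k+4) := by
  have hs : 0 ≤ (k:ℝ) - (R+3)^2 := by linarith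
  set S := (k:ℝ) - (R+3)^2 with hS
  have hk' : (k:ℝ) = (R+3)^2 + S := by rw [hS]; ring
  rw [hk']
  nlinarith [hR, hs, mul_nonneg hR hs, mul_nonneg (mul_nonneg hR hR) hs,
    mul_nonneg hs hs, mul_nonneg hR hR, mul_nonneg (mul_nonneg hR hR) hR,
    mul_nonneg (mul_nonneg hR hR) (mul_nonneg hR hR)]

/-- Raabe-type summability test. -/
lemma summable_of_raabe {M : ℕ → ℝ} (h0 : ∀ n, 0 ≤ M n) {N : ℕ}
    (h : ∀ n, N ≤ n → ((n:ℝ)+1) * M (n+1) ≤ ((n:ℝ) - 1/4) * M n) : Summable M := by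
  rw [← summable_nat_add_iff N]
  apply summable_of_sum_range_le (c := 4 * ((N:ℝ) * M N)) (fun n => h0 _)
  intro m
  have key : ∀ i : ℕ, (1/4) * M (i+N) ≤
      ((i+N:ℝ)) * M (i+N) - ((i+N:ℝ)+1) * M (i+N+1) := by
    intro i
    have := h (i+N) (by omega)
    push_cast at this ⊢
    linarith
  have tele : ∑ i ∈ Finset.range m, (((i+N:ℝ)) * M (i+N) - ((i+N:ℝ)+1) * M (i+N+1)) =
      (N:ℝ) * M N - ((m+N:ℝ)) * M (m+N) := by
    have := Finset.sum_range_sub' (f := fun i => ((i+N:ℝ)) * M (i+N)) m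
    push_cast at this ⊢
    convert this using 2 with i
    · push_cast; ring_nf
    · norm_num
  have h1 : ∑ i ∈ Finset.range m, (1/4) * M (i+N) ≤ (N:ℝ) * M N := by
    calc ∑ i ∈ Finset.range m, (1/4) * M (i+N)
        ≤ ∑ i ∈ Finset.range m, (((i+N:ℝ)) * M (i+N) - ((i+N:ℝ)+1) * M (i+N+1)) :=
          Finset.sum_le_sum (fun i _ => key i)
      _ = (N:ℝ) * M N - ((m+N:ℝ)) * M (m+N) := tele
      _ ≤ (N:ℝ) * M N := by
          have := mul_nonneg (by positivity : (0:ℝ) ≤ ((m+N:ℝ))) (h0 (m+N))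
          linarith
  rw [← Finset.mul_sum] at h1
  linarith

/-- ratio identity -/
lemma FF_ratio (k : ℕ) (R : ℝ) :
    FF (k+2) R * ((R+2*(k:ℝ)+3)*(R+2*(k:ℝ)+4)*((k:ℝ)+2)) =
    FF (k+1) R * ((R+3*(k:ℝ)+3)*(R+3*(k:ℝ)+4)*(R+3*(k:ℝ)+5)) := by
  have e2 : ∏ i ∈ Finset.range (k+3), (R + 2*(k:ℝ)+3+(i:ℝ)) =
      (∏ i ∈ Finset.range (k+1), (R + 2*((k:ℝ)+1)+3+(i:ℝ))) * ((R+2*(k:ℝ)+3) * (R+2*(k:ℝ)+4)) := by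
    rw [Finset.prod_range_succ', Finset.prod_range_succ']
    rw [mul_assoc]
    congr 1
    · apply Finset.prod_congr rfl; intro i _; push_cast; ring
    · push_cast; ring
  have e3 : ∏ i ∈ Finset.range (k+3), (R + 2*(k:ℝ)+3+(i:ℝ)) =
      (∏ i ∈ Finset.range k, (R + 2*(k:ℝ)+3+(i:ℝ))) *
        ((R+3*(k:ℝ)+3) * ((R+3*(k:ℝ)+4) * (R+3*(k:ℝ)+5))) := by
    rw [show k+3 = ((k+1)+1)+1 from rfl, Finset.prod_range_succ, Finset.prod_range_succ,
      Finset.prod_range_succ]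
    rw [mul_assoc, mul_assoc]
    congr 2
    · push_cast; ring
    · push_cast; ring
  have keyprod := e2.symm.trans e3
  have hfact : (Nat.factorial (k+2) : ℝ) = ((k:ℝ)+2) * (Nat.factorial (k+1) : ℝ) := by
    rw [show k+2 = (k+1)+1 from rfl, Nat.factorial_succ]; push_cast; ring
  have hf1 : ((Nat.factorial (k+1):ℝ)) ≠ 0 := by positivity
  have hk2 : ((k:ℝ)+2) ≠ 0 := by positivity
  rw [FF_succ, FF_succ, hfact, div_mul_eq_mul_div, div_mul_eq_mul_div,
    div_eq_div_iff (by positivity) (by positivity)]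
  push_cast
  linear_combination (R*((k:ℝ)+2)*((Nat.factorial (k+1)):ℝ)) * keyprod

lemma raabe_step {R : ℝ} (hR : 0 ≤ R) (k : ℕ) (hk : (R+3)^2 ≤ (k:ℝ)) :
    ((k:ℝ)+2) * (FF (k+2) R * (4/27:ℝ)^(k+2)) ≤
      ((k:ℝ)+1-1/4) * (FF (k+1) R * (4/27:ℝ)^(k+1)) := by
  have hpow : (4/27:ℝ)^(k+2) = (4/27:ℝ)^(k+1) * (4/27) := by ring
  have hD0pos : (0:ℝ) < (R+2*(k:ℝ)+3)*(R+2*(k:ℝ)+4) := by positivity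
  have hratio := FF_ratio k R
  have hcube := raabe_cubic hR k hk
  have hFF := FF_nonneg hR (k+1)
  have hw : (0:ℝ) < (4/27:ℝ)^(k+1) := by positivity
  have key : FF (k+1) R * (4*((R+3*(k:ℝ)+3)*(R+3*(k:ℝ)+4)*(R+3*(k:ℝ)+5))) ≤
      FF (k+1) R * (27*((k:ℝ)+3/4)*((R+2*(k:ℝ)+3)*(R+2*(k:ℝ)+4))) := by
    apply mul_le_mul_of_nonneg_left _ hFF
    nlinarith [hcube]
  have key2 := mul_le_mul_of_nonneg_left key hw.le
  rw [hpow]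
  apply le_of_mul_le_mul_right _ hD0pos
  nlinarith [hratio, key2, hw]

lemma summable_M {R : ℝ} (hR : 0 ≤ R) : Summable (fun k => FF k R * (4/27:ℝ)^k) := by
  refine summable_of_raabe (fun n => mul_nonneg (FF_nonneg hR n) (by positivity))
    (N := ⌈(R+3)^2⌉₊ + 1) ?_
  intro n hn
  obtain ⟨k, rfl⟩ : ∃ k, n = k + 1 := ⟨n - 1, by omega⟩
  have hk : (R+3)^2 ≤ (k:ℝ) := by
    have h1 : ⌈(R+3)^2⌉₊ ≤ k := by omega
    calc (R+3)^2 ≤ (⌈(R+3)^2⌉₊ : ℝ) := Nat.le_ceil _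
    _ ≤ (k:ℝ) := by exact_mod_cast h1
  have hst := raabe_step hR k hk
  push_cast at hst ⊢
  convert hst using 2 <;> push_cast <;> ring

def cw : ℂ := 4/27

lemma norm_cw_pow (k : ℕ) : ‖cw ^ k‖ = (4/27:ℝ)^k := by
  rw [norm_pow]
  congr 1
  rw [show cw = (((4/27:ℝ)):ℂ) by norm_num [cw], Complex.norm_real,
    Real.norm_of_nonneg (by norm_num)]

lemma summable_norm_term (x : ℂ) : Summable (fun k => ‖FF k x * cw ^ k‖) := by
  refine Summable.of_nonneg_of_le (fun k => norm_nonneg _) (fun k => ?_)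
    (summable_M (norm_nonneg x))
  rw [norm_mul, norm_cw_pow]
  exact mul_le_mul_of_nonneg_right (FF_norm_le k x) (by positivity)

lemma summable_term (x : ℂ) : Summable (fun k => FF k x * cw ^ k) :=
  (summable_norm_term x).of_norm

/-- the sum function -/
def ff (x : ℂ) : ℂ := ∑' k, FF k x * cw ^ k

lemma ff_hom (x y : ℂ) : ff (x+y) = ff x * ff y := by
  unfold ff
  rw [tsum_mul_tsum_eq_tsum_sum_range_of_summable_norm (summable_norm_term x)
    (summable_norm_term y)]
  apply tsum_congr
  intro n
  rw [← rothe n x y, Finset.sum_mul]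
  apply Finset.sum_congr rfl
  intro j hj
  have hjn : j ≤ n := Finset.mem_range_succ_iff.mp hj
  have hcw : cw ^ j * cw ^ (n-j) = cw ^ n := by
    rw [← pow_add]
    congr 1
    omega
  calc FF j x * FF (n-j) y * cw ^ n
      = FF j x * FF (n-j) y * (cw ^ j * cw ^ (n-j)) := by rw [hcw]
    _ = FF j x * cw ^ j * (FF (n-j) y * cw ^ (n-j)) := by ring

lemma FF_differentiable (k : ℕ) : Differentiable ℂ (fun x : ℂ => FF k x) := by
  cases k with
  | zero => simp only [FF_zero]; exact differentiable_const 1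
  | succ j =>
    have hp : ∀ (s : ℕ), Differentiable ℂ (fun x : ℂ => ∏ i ∈ Finset.range s, (x + 2*(j:ℂ)+3+(i:ℂ))) := by
      intro s; induction s with
      | zero => simpa using differentiable_const (1:ℂ)
      | succ m ih =>
        simp only [Finset.prod_range_succ]
        exact ih.mul (((differentiable_id.add_const _).add_const _).add_const _)
    simp only [FF_succ]
    exact ((differentiable_id.mul (hp j)).div_const _)

lemma ff_differentiable : Differentiable ℂ ff := by
  intro x₀
  have hR : (0:ℝ) ≤ ‖x₀‖ + 1 := by positivity
  have hd : DifferentiableOn ℂ ff (Metric.ball 0 (‖x₀‖+1)) := by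
    unfold ff
    apply differentiableOn_tsum_of_summable_norm (summable_M hR)
      (fun k => ((FF_differentiable k).mul_const (cw ^ k)).differentiableOn)
      Metric.isOpen_ball
    intro k z hz
    rw [norm_mul, norm_cw_pow]
    have hz' : ‖z‖ ≤ ‖x₀‖ + 1 := by
      have := Metric.mem_ball.mp hz
      rw [dist_zero_right] at this
      linarith
    exact mul_le_mul_of_nonneg_right ((FF_norm_le k z).trans
      (FF_mono (norm_nonneg z) hz' k)) (by positivity)
  have hmem : x₀ ∈ Metric.ball (0:ℂ) (‖x₀‖+1) := by
    rw [Metric.mem_ball, dist_zero_right]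
    linarith
  exact (hd.differentiableAt (Metric.isOpen_ball.mem_nhds hmem))

lemma ff_zero_eq : ff 0 = 1 := by
  unfold ff
  rw [tsum_eq_single 0]
  · simp [FF_zero]
  · intro k hk
    obtain ⟨j, rfl⟩ : ∃ j, k = j + 1 := ⟨k - 1, by omega⟩
    rw [FF_succ_zero, zero_mul]

lemma ff_ne_zero (x : ℂ) : ff x ≠ 0 := by
  intro h
  have h1 : ff x * ff (-x) = 1 := by
    rw [← ff_hom]
    simp [ff_zero_eq]
  rw [h, zero_mul] at h1
  exact zero_ne_one h1

lemma FF_cast (k : ℕ) (t : ℝ) : ((FF k t : ℝ) : ℂ) = FF k ((t:ℂ)) := by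
  cases k with
  | zero => simp [FF_zero]
  | succ j =>
    rw [FF_succ, FF_succ]
    push_cast
    ring

def fr (t : ℝ) : ℝ := ∑' k, FF k t * (4/27:ℝ)^k

lemma fr_cast (t : ℝ) : ((fr t : ℝ) : ℂ) = ff ((t:ℂ)) := by
  unfold fr ff
  rw [Complex.ofReal_tsum]
  apply tsum_congr
  intro k
  push_cast
  rw [FF_cast]
  norm_num [cw]

lemma fr_hom (s t : ℝ) : fr (s+t) = fr s * fr t := by
  apply Complex.ofReal_injective
  push_cast
  rw [fr_cast, fr_cast, fr_cast, ← ff_hom]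
  push_cast
  rfl

lemma fr_pos (t : ℝ) : 0 < fr t := by
  have h1 : fr t = fr (t/2) * fr (t/2) := by
    rw [← fr_hom]; norm_num
  have h2 : fr (t/2) ≠ 0 := by
    intro h
    have := fr_cast (t/2)
    rw [h] at this
    exact ff_ne_zero _ (by rw [← this]; norm_num)
  rw [h1]
  exact lt_of_le_of_ne (mul_self_nonneg _) (by symm; exact mul_ne_zero h2 h2)

lemma fr_one : fr 1 = 3/2 := by
  have sr : Summable (fun k => FF k (1:ℝ) * (4/27:ℝ)^k) := summable_M (by norm_num)
  have hshift : fr 1 = 1 + (4/27) * fr 3 := by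
    unfold fr
    rw [Summable.tsum_eq_zero_add sr]
    congr 1
    · simp [FF_zero]
    · rw [← tsum_mul_left]
      apply tsum_congr
      intro k
      rw [FF_succ_one, pow_succ]
      ring
  have hcube : fr 3 = (fr 1)^3 := by
    have h3 : (3:ℝ) = 1 + (1 + 1) := by norm_num
    rw [h3, fr_hom, fr_hom]
    ring
  set g := fr 1 with hg
  have hE : 4*g^3 - 27*g + 27 = 0 := by
    rw [hcube] at hshift
    nlinarith [hshift]
  have hfac : (2*g-3)^2 * (g+3) = 0 := by linear_combination hE
  rcases mul_eq_zero.mp hfac with h | h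
  · have : 2*g - 3 = 0 := by
      exact pow_eq_zero_iff (n := 2) (by norm_num) |>.mp h
    linarith
  · have := fr_pos 1
    rw [← hg] at this
    linarith

lemma fr_continuous : Continuous fr := by
  have h : Continuous (fun t : ℝ => (ff ((t:ℂ))).re) :=
    Complex.continuous_re.comp (ff_differentiable.continuous.comp Complex.continuous_ofReal)
  apply h.congr
  intro t
  rw [← fr_cast]
  simp

lemma fr_eq_exp (t : ℝ) : fr t = Real.exp (t * Real.log (3/2)) := by
  set L : ℝ →+ ℝ := AddMonoidHom.mk' (fun t => Real.log (fr t)) (by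
    intro a b
    show Real.log (fr (a+b)) = Real.log (fr a) + Real.log (fr b)
    rw [fr_hom, Real.log_mul (fr_pos a).ne' (fr_pos b).ne']) with hL
  have hLc : Continuous L := by
    rw [continuous_iff_continuousAt]
    intro t
    exact (Real.continuousAt_log (fr_pos t).ne').comp fr_continuous.continuousAt
  have hLt : ∀ t : ℝ, L t = t * L 1 := by
    intro t
    have hco := AddMonoidHom.coe_toRealLinearMap L hLc
    calc L t = (L.toRealLinearMap hLc) t := by rw [hco]
    _ = t • (L.toRealLinearMap hLc) 1 := by
        rw [← map_smul]
        norm_num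
    _ = t * L 1 := by rw [hco, smul_eq_mul]
  have hL1 : L 1 = Real.log (3/2) := by
    show Real.log (fr 1) = _
    rw [fr_one]
  have := hLt t
  rw [hL1] at this
  have hexp : Real.exp (L t) = fr t := Real.exp_log (fr_pos t)
  rw [← hexp, this]

lemma ff_eq_exp (z : ℂ) : ff z = Complex.exp (z * (Real.log (3/2) : ℂ)) := by
  have hff : AnalyticOnNhd ℂ ff Set.univ :=
    (ff_differentiable.differentiableOn).analyticOnNhd isOpen_univ
  have hgd : Differentiable ℂ (fun z : ℂ => Complex.exp (z * (Real.log (3/2) : ℂ))) :=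
    (differentiable_id.mul_const _).cexp
  have hg : AnalyticOnNhd ℂ (fun z : ℂ => Complex.exp (z * (Real.log (3/2) : ℂ))) Set.univ :=
    (hgd.differentiableOn).analyticOnNhd isOpen_univ
  have hseq : Tendsto (fun n : ℕ => ((1/((n:ℝ)+1) : ℝ) : ℂ)) atTop (𝓝[≠] 0) := by
    apply tendsto_nhdsWithin_of_tendsto_nhds_of_eventually_within
    · have h0 : Tendsto (fun n : ℕ => (1/((n:ℝ)+1))) atTop (𝓝 (0:ℝ)) :=
        tendsto_one_div_add_atTop_nhds_zero_nat
      have h2 := (Complex.continuous_ofReal.tendsto 0).comp h0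
      have h3 : ((0:ℝ):ℂ) = 0 := by norm_num
      rw [h3] at h2
      exact h2
    · apply Eventually.of_forall
      intro n
      simp only [Set.mem_compl_iff, Set.mem_singleton_iff]
      intro h
      rw [Complex.ofReal_eq_zero] at h
      have : (0:ℝ) < 1/((n:ℝ)+1) := by positivity
      linarith [this, h.symm.le]
  have heq : ∀ n : ℕ, ff ((1/((n:ℝ)+1) : ℝ) : ℂ) =
      Complex.exp ((((1/((n:ℝ)+1)) : ℝ) : ℂ) * (Real.log (3/2) : ℂ)) := by
    intro n
    rw [← fr_cast, fr_eq_exp, Complex.ofReal_exp]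
    push_cast
    ring_nf
  have hfreq : ∃ᶠ z in 𝓝[≠] (0:ℂ), ff z = Complex.exp (z * (Real.log (3/2) : ℂ)) :=
    hseq.frequently (Frequently.of_forall heq)
  have := hff.eq_of_frequently_eq hg hfreq
  exact congrFun this z


/-- The generalized hypergeometric series ₃F₂(a₁,a₂,a₃; b₁,b₂; 1) over ℂ. -/
noncomputable def hyp3F2 (a₁ a₂ a₃ b₁ b₂ : ℂ) : ℂ :=
  ∑' k : ℕ,
    ((ascPochhammer ℂ k).eval a₁ * (ascPochhammer ℂ k).eval a₂ * (ascPochhammer ℂ k).eval a₃) /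
    ((ascPochhammer ℂ k).eval b₁ * (ascPochhammer ℂ k).eval b₂ * (Nat.factorial k : ℂ))

/-- `x` is not a nonpositive integer (equivalently, not a pole of Γ). -/
def NotNonposInt (x : ℂ) : Prop := ∀ m : ℕ, x ≠ -(m : ℂ)

lemma P_prod (k : ℕ) (x : ℂ) :
    (ascPochhammer ℂ k).eval x = ∏ i ∈ Finset.range k, (x + (i:ℂ)) := by
  induction k with
  | zero => simp
  | succ n ih => rw [ascPochhammer_succ_eval, ih, Finset.prod_range_succ]

lemma P_add (n m : ℕ) (x : ℂ) :
    (ascPochhammer ℂ (n+m)).eval x =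
      (ascPochhammer ℂ n).eval x * (ascPochhammer ℂ m).eval (x + (n:ℂ)) := by
  rw [← ascPochhammer_mul]
  rw [Polynomial.eval_mul, Polynomial.eval_comp]
  simp

lemma P_ne_zero {c : ℂ} (hc : NotNonposInt c) (k : ℕ) : (ascPochhammer ℂ k).eval c ≠ 0 := by
  rw [P_prod]
  apply Finset.prod_ne_zero_iff.mpr
  intro i _
  intro h
  exact hc i (by linear_combination h)

lemma P_trip (k : ℕ) (x : ℂ) :
    (ascPochhammer ℂ (3*k)).eval (3*x) =
      27^k * ((ascPochhammer ℂ k).eval x * (ascPochhammer ℂ k).eval (x+1/3) *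
        (ascPochhammer ℂ k).eval (x+2/3)) := by
  induction k with
  | zero => simp
  | succ n ih =>
    have h3 : 3*(n+1) = 3*n + 3 := by ring
    have hP3 : (ascPochhammer ℂ 3).eval (3*x + ((3*n:ℕ):ℂ)) =
        (3*x + 3*(n:ℂ)) * (3*x + 3*(n:ℂ)+1) * (3*x + 3*(n:ℂ)+2) := by
      have h32 : (3:ℕ) = 2+1 := rfl
      rw [h32, ascPochhammer_succ_eval, ascPochhammer_succ_eval, ascPochhammer_succ_eval]
      simp only [ascPochhammer_zero, Polynomial.eval_one]
      push_cast
      ring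
    rw [h3, P_add (3*n) 3 (3*x), ih, hP3]
    rw [ascPochhammer_succ_eval, ascPochhammer_succ_eval, ascPochhammer_succ_eval]
    push_cast
    ring

lemma P_dup (k : ℕ) (y : ℂ) :
    (ascPochhammer ℂ (2*k)).eval (2*y) =
      4^k * ((ascPochhammer ℂ k).eval y * (ascPochhammer ℂ k).eval (y+1/2)) := by
  induction k with
  | zero => simp
  | succ n ih =>
    have h2 : 2*(n+1) = 2*n + 2 := by ring
    have hP2 : (ascPochhammer ℂ 2).eval (2*y + ((2*n:ℕ):ℂ)) =
        (2*y + 2*(n:ℂ)) * (2*y + 2*(n:ℂ)+1) := by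
      have h21 : (2:ℕ) = 1+1 := rfl
      rw [h21, ascPochhammer_succ_eval, ascPochhammer_succ_eval]
      simp only [ascPochhammer_zero, Polynomial.eval_one]
      push_cast
      ring
    rw [h2, P_add (2*n) 2 (2*y), ih, hP2]
    rw [ascPochhammer_succ_eval, ascPochhammer_succ_eval]
    push_cast
    ring

theorem stmt13 (a : ℂ) (h1 : NotNonposInt (3*a)) (h2 : NotNonposInt (3*a + 1/2)) :
    hyp3F2 (2*a) (2*a - 1/3) (2*a + 1/3) (3*a) (3*a + 1/2) =
      ((3 : ℂ)/2)^(6*a - 1) := by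
  set b : ℂ := 6*a - 1 with hb
  -- step 1: term identity
  have hterm : ∀ k : ℕ,
      ((ascPochhammer ℂ k).eval (2*a) * (ascPochhammer ℂ k).eval (2*a-1/3) *
        (ascPochhammer ℂ k).eval (2*a+1/3)) /
      ((ascPochhammer ℂ k).eval (3*a) * (ascPochhammer ℂ k).eval (3*a+1/2) *
        (Nat.factorial k : ℂ)) = FF k b * cw ^ k := by
    intro k
    have hden1 := P_ne_zero h1 k
    have hden2 := P_ne_zero h2 k
    have hfk : ((Nat.factorial k : ℂ)) ≠ 0 := by
      exact_mod_cast Nat.cast_ne_zero.mpr (Nat.factorial_ne_zero k)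
    -- numerator triplication with x = 2a - 1/3
    have e1 : (ascPochhammer ℂ (3*k)).eval b =
        27^k * ((ascPochhammer ℂ k).eval (2*a) * (ascPochhammer ℂ k).eval (2*a-1/3) *
          (ascPochhammer ℂ k).eval (2*a+1/3)) := by
      have h := P_trip k (2*a - 1/3)
      have hx : 3*(2*a - 1/3) = b := by rw [hb]; ring
      have hx1 : 2*a - 1/3 + 1/3 = 2*a := by ring
      have hx2 : 2*a - 1/3 + 2/3 = 2*a + 1/3 := by ring
      rw [hx, hx1, hx2] at h
      rw [h]
      ring
    -- denominator duplication with y = 3a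
    have e2 : (ascPochhammer ℂ (2*k)).eval (b+1) =
        4^k * ((ascPochhammer ℂ k).eval (3*a) * (ascPochhammer ℂ k).eval (3*a+1/2)) := by
      have h := P_dup k (3*a)
      have hy : 2*(3*a) = b+1 := by rw [hb]; ring
      rw [hy] at h
      exact h
    have hP2k : (ascPochhammer ℂ (2*k)).eval (b+1) ≠ 0 := by
      rw [e2]
      exact mul_ne_zero (pow_ne_zero _ (by norm_num)) (mul_ne_zero hden1 hden2)
    cases k with
    | zero => simp [FF_zero]
    | succ j =>
      -- splitting of the numerator Pochhammer
      have esplit : (ascPochhammer ℂ (3*(j+1))).eval b =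
          b * (ascPochhammer ℂ (2*(j+1))).eval (b+1) *
            (ascPochhammer ℂ j).eval (b + 2*(j:ℂ)+3) := by
        have ha : 3*(j+1) = 1 + (2*(j+1) + j) := by ring
        rw [ha, P_add 1 (2*(j+1)+j) b, P_add (2*(j+1)) j (b + (1:ℕ))]
        have hb1 : (ascPochhammer ℂ 1).eval b = b := by
          rw [ascPochhammer_one]; simp
        rw [hb1]
        push_cast
        ring_nf
      rw [div_eq_iff (by exact mul_ne_zero (mul_ne_zero hden1 hden2) hfk)]
      -- multiply up by 27^k
      have h27 : ((27:ℂ))^(j+1) ≠ 0 := pow_ne_zero _ (by norm_num)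
      apply mul_left_cancel₀ h27
      rw [← e1, esplit]
      rw [FF_succ]
      rw [show cw = 4/27 from rfl]
      have hPj : (ascPochhammer ℂ j).eval (b + 2*(j:ℂ)+3) =
          ∏ i ∈ Finset.range j, (b + 2*(j:ℂ)+3+(i:ℂ)) := P_prod j _
      rw [hPj, e2]
      simp only [div_pow]
      field_simp
  -- step 2: sum it
  have hsum : hyp3F2 (2*a) (2*a - 1/3) (2*a + 1/3) (3*a) (3*a + 1/2) = ff b := by
    unfold hyp3F2 ff
    exact tsum_congr hterm
  rw [hsum, ff_eq_exp]
  -- step 3: identification with cpow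
  have h32 : ((3:ℂ)/2) ≠ 0 := by norm_num
  rw [Complex.cpow_def_of_ne_zero h32]
  have hlog : Complex.log ((3:ℂ)/2) = (Real.log (3/2) : ℂ) := by
    have hh : ((3:ℂ)/2) = (((3/2:ℝ)):ℂ) := by norm_num
    rw [hh, Complex.ofReal_log (by norm_num : (0:ℝ) ≤ 3/2)]
  rw [hlog, mul_comm]


end
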